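/- For every integer K ≥ 3, all real κ_1,…,κ_K and every nonzero complex z, the coefficient of λ^2 in det(λI − M(z)) equals c_2 = (1/2) Σ_{m_1=1}^{K} Σ_{m_2=1}^{K−1} m_2 (K − m_2) ∏_{i ∉ {m_1, m_1+m_2 mod K}} κ_i, where the product runs over all indices i ∈ {1,…,K} (taken mod K) other than m_1 and m_1+m_2. -/

import Mathlib

open Finset

open Polynomial

open Finset

noncomputable def pm (a b w : ℕ → ℂ) (n : ℕ) : Matrix (Fin n) (Fin n) ℂ :=
  Matrix.of fun i j =>
    if (i : ℕ) = j then w i + w ((i : ℕ) + 1)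
    else if (i : ℕ) + 1 = j then -(a (j : ℕ))
    else if (j : ℕ) + 1 = i then -(b (i : ℕ))
    else 0

noncomputable def Efun (w : ℕ → ℂ) (n : ℕ) : ℂ :=
  ∑ t ∈ range (n+1), ∏ s ∈ (range (n+1)).erase t, w s

lemma Efun_succ (w : ℕ → ℂ) (m : ℕ) :
    Efun w (m+1) = w (m+1) * Efun w m + ∏ s ∈ range (m+1), w s := by
  unfold Efun
  rw [sum_range_succ]
  have h1 : (range (m+2)).erase (m+1) = range (m+1) := by
    rw [range_add_one, erase_insert (by simp)]
  rw [h1]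
  congr 1
  rw [mul_sum]
  refine Finset.sum_congr rfl fun t ht => ?_
  have ht' : t ≠ m + 1 := by simp at ht; omega
  have h2 : (range (m+2)).erase t = insert (m+1) ((range (m+1)).erase t) := by
    rw [range_add_one, erase_insert_of_ne (Ne.symm ht')]
  rw [h2, prod_insert (by simp)]

lemma Efun_rec (w : ℕ → ℂ) (n : ℕ) :
    Efun w (n+2) = (w (n+1) + w (n+2)) * Efun w (n+1) - w (n+1) * w (n+1) * Efun w n := by
  have h1 := Efun_succ w (n+1)
  have h2 := Efun_succ w n
  have hp : ∏ s ∈ range (n+2), w s = w (n+1) * ∏ s ∈ range (n+1), w s := by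
    rw [prod_range_succ]; ring
  linear_combination h1 - w (n+1) * h2 + hp

theorem pm_det (a b w : ℕ → ℂ) (hab : ∀ t, a t * b t = w t * w t) :
    ∀ n, (pm a b w n).det = Efun w n := by
  have key : ∀ n, (pm a b w (n+2)).det
      = (w (n+1) + w (n+2)) * (pm a b w (n+1)).det
        - a (n+1) * b (n+1) * (pm a b w n).det := by
    intro n
    have hsub_l : (pm a b w (n+2)).submatrix (Fin.last (n+1)).succAbove (Fin.last (n+1)).succAbove
        = pm a b w (n+1) := by
      ext i j
      simp [Matrix.submatrix_apply, Fin.succAbove_last, pm]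
    set jn : Fin (n+2) := ⟨n, by omega⟩ with hjn
    have hsucc_jn : jn.succAbove (Fin.last n) = Fin.last (n+1) := by
      rw [Fin.succAbove]
      simp [jn, Fin.lt_def]
    have hsucc_jn' : ∀ t : Fin n, jn.succAbove t.castSucc = t.castSucc.castSucc := by
      intro t
      rw [Fin.succAbove]
      simp only [Fin.lt_def, Fin.coe_castSucc, jn]
      rw [if_pos (by omega)]
    set Sm := (pm a b w (n+2)).submatrix (Fin.last (n+1)).succAbove jn.succAbove with hSm
    have hsub_m : Sm.submatrix (Fin.last n).succAbove (Fin.last n).succAbove = pm a b w n := by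
      ext s t
      simp only [Matrix.submatrix_apply, Fin.succAbove_last, hSm, hsucc_jn']
      simp [pm]
    have hdetSm : Sm.det = -(a (n+1)) * (pm a b w n).det := by
      rw [Matrix.det_succ_column Sm (Fin.last n)]
      rw [Finset.sum_eq_single (Fin.last n)]
      · rw [hsub_m]
        have h1 : Sm (Fin.last n) (Fin.last n) = -(a (n+1)) := by
          simp only [hSm, Matrix.submatrix_apply, Fin.succAbove_last, hsucc_jn]
          simp [pm, Fin.last]
        rw [h1]
        have h2 : ((-1:ℂ))^((Fin.last n : ℕ) + (Fin.last n : ℕ)) = 1 :=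
          Even.neg_one_pow ⟨n, by simp [Fin.last]⟩
        rw [h2]; ring
      · intro i _ hi
        have h0 : Sm i (Fin.last n) = 0 := by
          simp only [hSm, Matrix.submatrix_apply, Fin.succAbove_last, hsucc_jn]
          have : (i : ℕ) < n := by
            rcases Fin.lt_or_eq_of_le (Fin.le_last i) with h | h
            · exact h
            · exact absurd h hi
          simp only [pm, Matrix.of_apply, Fin.coe_castSucc, Fin.val_last]
          rw [if_neg (by omega), if_neg (by omega), if_neg (by omega)]
        rw [h0]; ring
      · intro h; exact absurd (Finset.mem_univ _) h
    have hentry_l : pm a b w (n+2) (Fin.last (n+1)) (Fin.last (n+1)) = w (n+1) + w (n+2) := by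
      simp [pm, Fin.last]
    have hentry_n : pm a b w (n+2) (Fin.last (n+1)) jn = -(b (n+1)) := by
      show (if n+1 = n then _ else if n+1+1 = n then _ else if n+1 = n+1 then -(b (n+1)) else _) = -(b (n+1))
      rw [if_neg (by omega), if_neg (by omega), if_pos rfl]
    rw [Matrix.det_succ_row (pm a b w (n+2)) (Fin.last (n+1))]
    rw [Finset.sum_eq_add jn (Fin.last (n+1)) (Fin.ne_of_val_ne (by show n ≠ n+1; omega))]
    · rw [hentry_l, hentry_n, hsub_l, ← hSm, hdetSm]
      have h2 : ((-1:ℂ))^((Fin.last (n+1) : ℕ) + (Fin.last (n+1) : ℕ)) = 1 :=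
        Even.neg_one_pow ⟨n+1, by simp [Fin.last]⟩
      have h3 : ((-1:ℂ))^((Fin.last (n+1) : ℕ) + (jn : ℕ)) = -1 :=
        Odd.neg_one_pow ⟨n, by simp [Fin.last, jn]; ring⟩
      rw [h2, h3]; ring
    · intro c _ hc
      have h0 : pm a b w (n+2) (Fin.last (n+1)) c = 0 := by
        simp only [pm, Matrix.of_apply, Fin.val_last]
        have hc1 : (c : ℕ) ≠ n := fun h => hc.1 (Fin.ext h)
        have hc2 : (c : ℕ) ≠ n + 1 := fun h => hc.2 (Fin.ext h)
        rw [if_neg (by omega), if_neg (by omega), if_neg (by omega)]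
      rw [h0]; ring
    · intro h; exact absurd (Finset.mem_univ _) h
    · intro h; exact absurd (Finset.mem_univ _) h
  intro n
  induction n using Nat.strong_induction_on with
  | _ n ih =>
    match n with
    | 0 => simp [pm, Efun]
    | 1 =>
      rw [show (pm a b w 1).det = pm a b w 1 0 0 from Matrix.det_fin_one _]
      have e0 : (range 2).erase 0 = {1} := by decide
      have e1 : (range 2).erase 1 = {0} := by decide
      simp [pm, Efun, Finset.sum_range_succ, e0, e1]
      ring
    | (n+2) =>
      rw [key n, ih (n+1) (by omega), ih n (by omega), Efun_rec, hab]


theorem charpoly_coeff_minors (n k : ℕ) (A : Matrix (Fin n) (Fin n) ℂ) :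
    A.charpoly.coeff k =
      ∑ S ∈ Finset.powersetCard k Finset.univ,
        ((-A).submatrix (fun x : {x : Fin n // x ∉ S} => (x : Fin n))
          (fun x : {x : Fin n // x ∉ S} => (x : Fin n))).det := by
  classical
  have hprod : ∀ σ : Equiv.Perm (Fin n), (∏ i, A.charmatrix (σ i) i).coeff k
      = ∑ t ∈ Finset.powerset Finset.univ,
          (if t.card = k ∧ ∀ i ∈ t, σ i = i then ∏ i ∈ Finset.univ \ t, (-A) (σ i) i else 0) := by
    intro σ
    have hentry : ∀ i, A.charmatrix (σ i) i
        = (if σ i = i then (X : ℂ[X]) else 0) + C ((-A) (σ i) i) := by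
      intro i
      by_cases h : σ i = i <;>
        simp [Matrix.charmatrix_apply, Matrix.diagonal_apply, h, sub_eq_add_neg]
    calc (∏ i, A.charmatrix (σ i) i).coeff k
        = (∑ t ∈ Finset.powerset Finset.univ,
            (∏ i ∈ t, if σ i = i then (X : ℂ[X]) else 0) *
              ∏ i ∈ Finset.univ \ t, C ((-A) (σ i) i)).coeff k := by
          congr 1
          rw [← Finset.prod_add]
          exact Finset.prod_congr rfl fun i _ => hentry i
      _ = _ := by
          rw [finset_sum_coeff]
          refine Finset.sum_congr rfl fun t _ => ?_
          by_cases hfix : ∀ i ∈ t, σ i = i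
          · have h1 : (∏ i ∈ t, if σ i = i then (X : ℂ[X]) else 0) = X ^ t.card := by
              rw [Finset.prod_congr rfl (fun i hi => if_pos (hfix i hi)), Finset.prod_const]
            have h2 : (∏ i ∈ Finset.univ \ t, C ((-A) (σ i) i))
                = C (∏ i ∈ Finset.univ \ t, (-A) (σ i) i) := by rw [map_prod]
            rw [h1, h2, mul_comm, coeff_C_mul, coeff_X_pow]
            by_cases hk : t.card = k
            · rw [if_pos hk.symm, mul_one, if_pos (⟨hk, hfix⟩ : _ ∧ _)]
            · rw [if_neg (fun h => hk h.symm), mul_zero,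
                if_neg (fun h : _ ∧ _ => hk h.1)]
          · push_neg at hfix
            obtain ⟨i, hi, hne⟩ := hfix
            have h0 : (∏ i ∈ t, if σ i = i then (X : ℂ[X]) else 0) = 0 :=
              Finset.prod_eq_zero hi (if_neg hne)
            rw [h0, zero_mul, coeff_zero, if_neg (fun h => hne (h.2 i hi))]
  have hminor : ∀ t : Finset (Fin n),
      ∑ σ ∈ Finset.univ.filter (fun σ : Equiv.Perm (Fin n) => ∀ i ∈ t, σ i = i),
        ((Equiv.Perm.sign σ : ℤ) : ℂ) * ∏ i ∈ Finset.univ \ t, (-A) (σ i) i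
      = ((-A).submatrix (fun x : {x : Fin n // x ∉ t} => (x : Fin n))
          (fun x : {x : Fin n // x ∉ t} => (x : Fin n))).det := by
    intro t
    rw [Matrix.det_apply']
    set p : Fin n → Prop := fun x => x ∉ t with hp
    have hmaps : ∀ σ : Equiv.Perm (Fin n), (∀ i ∈ t, σ i = i) → ∀ x : Fin n, p x ↔ p (σ x) := by
      intro σ hσ x
      simp only [hp]
      constructor
      · intro hx hσx
        exact hx ((σ.injective (hσ _ hσx)) ▸ hσx)
      · intro hσx hx
        exact hσx (by rw [hσ x hx]; exact hx)
    set restr : Equiv.Perm (Fin n) → Equiv.Perm {x // p x} := fun σ =>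
      if h : ∀ x : Fin n, p x ↔ p (σ x) then σ.subtypePerm (fun x => (h x).symm) else 1 with hrestr
    have hleft : ∀ σ : Equiv.Perm (Fin n), (∀ i ∈ t, σ i = i) →
        Equiv.Perm.ofSubtype (restr σ) = σ := by
      intro σ hσ
      rw [hrestr]
      simp only [dif_pos (hmaps σ hσ)]
      ext x
      by_cases hx : p x
      · rw [Equiv.Perm.ofSubtype_apply_of_mem _ hx]; rfl
      · rw [Equiv.Perm.ofSubtype_apply_of_not_mem _ hx, hσ x (not_not.mp hx)]
        
    refine Finset.sum_bij' (fun σ _ => restr σ) (fun τ _ => Equiv.Perm.ofSubtype τ)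
      (fun σ hσ => Finset.mem_univ _) ?_ ?_ ?_ ?_
    · intro τ _
      rw [Finset.mem_filter]
      exact ⟨Finset.mem_univ _, fun i hi =>
        Equiv.Perm.ofSubtype_apply_of_not_mem τ (not_not_intro hi)⟩
    · intro σ hσ
      exact hleft σ (Finset.mem_filter.mp hσ).2
    · intro τ _
      have h : ∀ x : Fin n, p x ↔ p (Equiv.Perm.ofSubtype τ x) := by
        intro x
        constructor
        · intro hx
          rw [Equiv.Perm.ofSubtype_apply_of_mem _ hx]
          exact (τ ⟨x, hx⟩).2
        · intro hx
          by_contra hx'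
          rw [Equiv.Perm.ofSubtype_apply_of_not_mem τ (not_not_intro hx')] at hx
          exact hx hx'
      rw [hrestr]
      simp only [dif_pos h]
      ext x
      simp [Equiv.Perm.subtypePerm_apply, Equiv.Perm.ofSubtype_apply_of_mem _ x.2]
    · intro σ hσ
      have hfix := (Finset.mem_filter.mp hσ).2
      have hsign : Equiv.Perm.sign σ = Equiv.Perm.sign (restr σ) := by
        have h := Equiv.Perm.sign_ofSubtype (restr σ)
        rw [hleft σ hfix] at h
        exact h
      rw [hsign]
      congr 1
      have hps : ∀ x : Fin n, x ∈ Finset.univ \ t ↔ x ∉ t := by simp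
      rw [Finset.prod_subtype (p := fun x => x ∉ t) (Finset.univ \ t) hps
        (fun i => (-A) (σ i) i)]
      refine Finset.prod_congr rfl fun x _ => ?_
      have happ := Equiv.Perm.ofSubtype_apply_of_mem (restr σ) x.2
      rw [hleft σ hfix] at happ
      rw [Matrix.submatrix_apply, happ]
  calc A.charpoly.coeff k
      = ∑ σ : Equiv.Perm (Fin n), ((Equiv.Perm.sign σ : ℤ) : ℂ)
          * (∏ i, A.charmatrix (σ i) i).coeff k := by
        rw [Matrix.charpoly, Matrix.det_apply', finset_sum_coeff]
        refine Finset.sum_congr rfl fun σ _ => ?_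
        rw [← Polynomial.C_eq_intCast, coeff_C_mul]
    _ = ∑ σ : Equiv.Perm (Fin n), ∑ t ∈ Finset.powerset Finset.univ,
          ((Equiv.Perm.sign σ : ℤ) : ℂ) *
          (if t.card = k ∧ ∀ i ∈ t, σ i = i then ∏ i ∈ Finset.univ \ t, (-A) (σ i) i else 0) := by
        refine Finset.sum_congr rfl fun σ _ => ?_
        rw [hprod σ, Finset.mul_sum]
    _ = ∑ t ∈ Finset.powerset Finset.univ, ∑ σ : Equiv.Perm (Fin n),
          ((Equiv.Perm.sign σ : ℤ) : ℂ) *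
          (if t.card = k ∧ ∀ i ∈ t, σ i = i then ∏ i ∈ Finset.univ \ t, (-A) (σ i) i else 0) :=
        Finset.sum_comm
    _ = ∑ t ∈ Finset.powerset Finset.univ,
          (if t.card = k then ∑ σ : Equiv.Perm (Fin n),
            ((Equiv.Perm.sign σ : ℤ) : ℂ) *
            (if ∀ i ∈ t, σ i = i then ∏ i ∈ Finset.univ \ t, (-A) (σ i) i else 0) else 0) := by
        refine Finset.sum_congr rfl fun t _ => ?_
        by_cases hk : t.card = k
        · rw [if_pos hk]
          refine Finset.sum_congr rfl fun σ _ => ?_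
          by_cases hf : ∀ i ∈ t, σ i = i
          · rw [if_pos ⟨hk, hf⟩, if_pos hf]
          · rw [if_neg (by tauto), if_neg hf]
        · rw [if_neg hk]
          rw [Finset.sum_eq_zero]
          intro σ _
          rw [if_neg (by tauto), mul_zero]
    _ = ∑ t ∈ Finset.powersetCard k Finset.univ, ∑ σ : Equiv.Perm (Fin n),
            ((Equiv.Perm.sign σ : ℤ) : ℂ) *
            (if ∀ i ∈ t, σ i = i then ∏ i ∈ Finset.univ \ t, (-A) (σ i) i else 0) := by
        rw [Finset.powersetCard_eq_filter, Finset.sum_filter]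
    _ = _ := by
        refine Finset.sum_congr rfl fun t _ => ?_
        rw [← hminor t]
        rw [Finset.sum_filter]
        exact Finset.sum_congr rfl fun σ _ => by rw [mul_ite, mul_zero]

/-- The `K × K` complex matrix `M(z)` of the periodic lattice diffusion operator:
rows/columns are indexed by `Fin K` (0-based, representing indices `1,…,K`);
`M_{i,i} = −(κ_{i−1} + κ_i)`, `M_{i,i+1} = M_{i+1,i} = κ_i`,
`M_{1,K} = κ_K z^{−K}`, `M_{K,1} = κ_K z^{K}`, all other entries `0`. -/
noncomputable def diffMatrix (K : ℕ) (κ : ℕ → ℝ) (z : ℂ) :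
    Matrix (Fin K) (Fin K) ℂ :=
  Matrix.of fun i j =>
    if i.val = j.val then -((κ i.val : ℂ) + (κ (i.val + 1) : ℂ))
    else if i.val + 1 = j.val then (κ (i.val + 1) : ℂ)
    else if j.val + 1 = i.val then (κ (j.val + 1) : ℂ)
    else if i.val = 0 ∧ j.val = K - 1 then (κ K : ℂ) * z⁻¹ ^ K
    else if i.val = K - 1 ∧ j.val = 0 then (κ K : ℂ) * z ^ K
    else 0


def fv (K : ℕ) (h : 0 < K) (m : ℕ) : Fin K := ⟨m % K, Nat.mod_lt m h⟩

noncomputable def ea (K : ℕ) (κ : ℕ → ℝ) (z : ℂ) (m : ℕ) : ℂ :=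
  if m % K = 0 then (κ K : ℂ) * z ^ K else (κ (m % K) : ℂ)

noncomputable def eb (K : ℕ) (κ : ℕ → ℝ) (z : ℂ) (m : ℕ) : ℂ :=
  if m % K = 0 then (κ K : ℂ) * z⁻¹ ^ K else (κ (m % K) : ℂ)

noncomputable def ew (K : ℕ) (κ : ℕ → ℝ) (m : ℕ) : ℂ := (κ (m % K) : ℂ)

lemma mod_two_cases (K : ℕ) (hK : 0 < K) (m δ : ℕ) (hδ : δ < K) :
    (m + δ) % K = m % K + δ ∨ (m + δ) % K + K = m % K + δ := by
  have h1 : (m + δ) % K = (m % K + δ) % K := (Nat.mod_add_mod m K δ).symm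
  by_cases h : m % K + δ < K
  · left; rw [h1, Nat.mod_eq_of_lt h]
  · right
    push_neg at h
    have hm := Nat.mod_lt m hK
    have h2 : m % K + δ - K < K := by omega
    have h3 : (m % K + δ) % K = (m % K + δ - K) % K := by
      rw [← Nat.mod_eq_sub_mod h]
    rw [h1, h3, Nat.mod_eq_of_lt h2]
    omega

lemma mod_off_ne (K : ℕ) (hK : 0 < K) (m δ : ℕ) (h1 : 1 ≤ δ) (h2 : δ < K) :
    (m + δ) % K ≠ m % K := by
  have hb1 := Nat.mod_lt (m + δ) hK
  have hb2 := Nat.mod_lt m hK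
  rcases mod_two_cases K hK m δ h2 with h | h <;> omega

lemma mod_ne_of_lt (K : ℕ) (hK : 0 < K) {m r r' : ℕ} (h : r < r') (h2 : r' - r < K) :
    (m + r') % K ≠ (m + r) % K := by
  have e : m + r' = (m + r) + (r' - r) := by omega
  rw [e]
  exact mod_off_ne K hK (m + r) (r' - r) (by omega) h2

lemma hab_lemma (K : ℕ) (κ : ℕ → ℝ) (z : ℂ) (hκ : κ 0 = κ K) (hz : z ≠ 0) (m : ℕ) :
    ea K κ z m * eb K κ z m = ew K κ m * ew K κ m := by
  unfold ea eb ew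
  by_cases h : m % K = 0
  · rw [if_pos h, if_pos h, h, hκ]
    have : (z : ℂ) ^ K * z⁻¹ ^ K = 1 := by
      rw [← mul_pow, mul_inv_cancel₀ hz, one_pow]
    calc (κ K : ℂ) * z ^ K * ((κ K : ℂ) * z⁻¹ ^ K)
        = (κ K : ℂ) * (κ K : ℂ) * (z ^ K * z⁻¹ ^ K) := by ring
      _ = (κ K : ℂ) * (κ K : ℂ) := by rw [this, mul_one]
  · rw [if_neg h, if_neg h]

section entries
variable (K : ℕ) (κ : ℕ → ℝ) (z : ℂ)

lemma negA_diag (h0 : 0 < K) (hK3 : 3 ≤ K) (hκ : κ 0 = κ K) (m : ℕ) :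
    (-(diffMatrix K κ z)) (fv K h0 m) (fv K h0 m) = ew K κ m + ew K κ (m + 1) := by
  have hb1 := Nat.mod_lt m h0
  have hb2 := Nat.mod_lt (m+1) h0
  simp only [diffMatrix, ew, Matrix.neg_apply, Matrix.of_apply, fv]
  simp only [if_true]
  rcases mod_two_cases K h0 m 1 (by omega) with h | h
  · rw [show (m+1) % K = m % K + 1 from h]; ring
  · have e1 : m % K + 1 = K := by omega
    have e2 : (m+1) % K = 0 := by omega
    rw [e1, e2, ← hκ]; ring

lemma negA_super (h0 : 0 < K) (hK3 : 3 ≤ K) (m : ℕ) :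
    (-(diffMatrix K κ z)) (fv K h0 m) (fv K h0 (m + 1)) = -(ea K κ z (m + 1)) := by
  have hb1 := Nat.mod_lt m h0
  have hb2 := Nat.mod_lt (m+1) h0
  simp only [diffMatrix, ea, Matrix.neg_apply, Matrix.of_apply, fv]
  rcases mod_two_cases K h0 m 1 (by omega) with h | h
  · rw [if_neg (by omega), if_pos (by omega), if_neg (by omega)]
    rw [show (m+1) % K = m % K + 1 from h]
  · rw [if_neg (by omega), if_neg (by omega), if_neg (by omega),
      if_neg (by omega), if_pos (by omega), if_pos (by omega)]

lemma negA_sub (h0 : 0 < K) (hK3 : 3 ≤ K) (m : ℕ) :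
    (-(diffMatrix K κ z)) (fv K h0 (m + 1)) (fv K h0 m) = -(eb K κ z (m + 1)) := by
  have hb1 := Nat.mod_lt m h0
  have hb2 := Nat.mod_lt (m+1) h0
  simp only [diffMatrix, eb, Matrix.neg_apply, Matrix.of_apply, fv]
  rcases mod_two_cases K h0 m 1 (by omega) with h | h
  · rw [if_neg (by omega), if_neg (by omega), if_pos (by omega), if_neg (by omega)]
    rw [show (m+1) % K = m % K + 1 from h]
  · rw [if_neg (by omega), if_neg (by omega), if_neg (by omega),
      if_pos (by omega), if_pos (by omega)]

lemma negA_far (h0 : 0 < K) (hK3 : 3 ≤ K) (m δ : ℕ) (h2 : 2 ≤ δ) (h3 : δ ≤ K - 2) :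
    (-(diffMatrix K κ z)) (fv K h0 m) (fv K h0 (m + δ)) = 0 ∧
    (-(diffMatrix K κ z)) (fv K h0 (m + δ)) (fv K h0 m) = 0 := by
  have hb1 := Nat.mod_lt m h0
  have hb2 := Nat.mod_lt (m+δ) h0
  rcases mod_two_cases K h0 m δ (by omega) with h | h <;>
  constructor <;>
  · simp only [diffMatrix, Matrix.neg_apply, Matrix.of_apply, fv]
    rw [if_neg (by omega), if_neg (by omega), if_neg (by omega),
      if_neg (by omega), if_neg (by omega)]
    exact neg_zero

end entries
lemma fv_ne (K : ℕ) (h0 : 0 < K) (m a b : ℕ) (h1 : a < b) (h2 : b - a < K) :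
    fv K h0 (m + b) ≠ fv K h0 (m + a) := by
  simp only [fv, ne_eq, Fin.mk.injEq]
  exact mod_ne_of_lt K h0 h1 h2

lemma mod_inj_window (K : ℕ) (h0 : 0 < K) (m a b : ℕ) (ha : a < K) (hb : b < K)
    (h : (m + a) % K = (m + b) % K) : a = b := by
  by_contra hne
  rcases Nat.lt_or_ge a b with hl | hl
  · exact mod_ne_of_lt K h0 hl (by omega) h.symm
  · exact mod_ne_of_lt K h0 (show b < a by omega) (by omega) h

lemma minor_det (K : ℕ) (h0 : 0 < K) (hK : 3 ≤ K) (κ : ℕ → ℝ) (hκ : κ 0 = κ K)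
    (z : ℂ) (hz : z ≠ 0) (u d : ℕ) (hd1 : 1 ≤ d) (hd2 : d ≤ K - 1)
    (S : Finset (Fin K)) (hS : S = {fv K h0 u, fv K h0 (u + d)}) :
    ((-(diffMatrix K κ z)).submatrix
        (fun x : {x : Fin K // x ∉ S} => (x : Fin K))
        (fun x : {x : Fin K // x ∉ S} => (x : Fin K))).det
      = ∑ t1 ∈ Finset.range d, ∑ t2 ∈ Finset.range (K - d),
          (∏ s ∈ (Finset.range d).erase t1, ew K κ (u + 1 + s)) *
          (∏ s ∈ (Finset.range (K - d)).erase t2, ew K κ (u + d + 1 + s)) := by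
  classical
  set n1 := d - 1 with hn1
  set n2 := K - d - 1 with hn2
  set f : Fin n1 ⊕ Fin n2 → Fin K :=
    Sum.elim (fun s => fv K h0 (u + 1 + (s : ℕ))) (fun s => fv K h0 (u + d + 1 + (s : ℕ)))
    with hf
  have hoffs : ∀ x : Fin n1 ⊕ Fin n2, ∃ r : ℕ, 1 ≤ r ∧ r ≤ K - 1 ∧ r ≠ d ∧
      f x = fv K h0 (u + r) := by
    intro x
    cases x with
    | inl s =>
      refine ⟨1 + (s : ℕ), by omega, by have := s.2; omega, by have := s.2; omega, ?_⟩
      simp only [hf, Sum.elim_inl]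
      congr 1
      omega
    | inr s =>
      refine ⟨d + 1 + (s : ℕ), by omega, by have := s.2; omega, by omega, ?_⟩
      simp only [hf, Sum.elim_inr]
      congr 1
      omega
  have hmem : ∀ x, f x ∉ S := by
    intro x
    obtain ⟨r, hr1, hr2, hr3, hr4⟩ := hoffs x
    rw [hS, hr4, Finset.mem_insert, Finset.mem_singleton]
    push_neg
    constructor
    · have e0 : fv K h0 u = fv K h0 (u + 0) := rfl
      rw [e0]
      exact fv_ne K h0 u 0 r (by omega) (by omega)
    · rcases Nat.lt_or_ge r d with h | h
      · exact (fv_ne K h0 u r d h (by omega)).symm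
      · exact fv_ne K h0 u d r (by omega) (by omega)
  set g : Fin n1 ⊕ Fin n2 → {x : Fin K // x ∉ S} := fun x => ⟨f x, hmem x⟩ with hg
  have hginj : Function.Injective g := by
    intro x y hxy
    have hfv : (f x).val = (f y).val := congrArg (fun w => (Subtype.val w).val) hxy
    cases x with
    | inl s =>
      cases y with
      | inl t =>
        have hs := s.2; have ht := t.2
        have e1 : u + 1 + (s : ℕ) = u + (1 + (s : ℕ)) := by omega
        have e2 : u + 1 + (t : ℕ) = u + (1 + (t : ℕ)) := by omega
        simp only [hf, Sum.elim_inl, fv] at hfv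
        rw [e1, e2] at hfv
        have := mod_inj_window K h0 u _ _ (by omega) (by omega) hfv
        exact congrArg Sum.inl (Fin.ext (by omega))
      | inr t =>
        have hs := s.2; have ht := t.2
        have e1 : u + 1 + (s : ℕ) = u + (1 + (s : ℕ)) := by omega
        have e2 : u + d + 1 + (t : ℕ) = u + (d + 1 + (t : ℕ)) := by omega
        simp only [hf, Sum.elim_inl, Sum.elim_inr, fv] at hfv
        rw [e1, e2] at hfv
        have := mod_inj_window K h0 u _ _ (by omega) (by omega) hfv
        omega
    | inr s =>
      cases y with
      | inl t =>
        have hs := s.2; have ht := t.2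
        have e1 : u + d + 1 + (s : ℕ) = u + (d + 1 + (s : ℕ)) := by omega
        have e2 : u + 1 + (t : ℕ) = u + (1 + (t : ℕ)) := by omega
        simp only [hf, Sum.elim_inl, Sum.elim_inr, fv] at hfv
        rw [e1, e2] at hfv
        have := mod_inj_window K h0 u _ _ (by omega) (by omega) hfv
        omega
      | inr t =>
        have hs := s.2; have ht := t.2
        have e1 : u + d + 1 + (s : ℕ) = u + (d + 1 + (s : ℕ)) := by omega
        have e2 : u + d + 1 + (t : ℕ) = u + (d + 1 + (t : ℕ)) := by omega
        simp only [hf, Sum.elim_inr, fv] at hfv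
        rw [e1, e2] at hfv
        have := mod_inj_window K h0 u _ _ (by omega) (by omega) hfv
        exact congrArg Sum.inr (Fin.ext (by omega))
  have hScard : S.card = 2 := by
    rw [hS, Finset.card_insert_of_notMem, Finset.card_singleton]
    simp only [Finset.mem_singleton]
    intro h
    exact fv_ne K h0 u 0 d (by omega) (by omega) h.symm
  have hcard : Fintype.card (Fin n1 ⊕ Fin n2) = Fintype.card {x : Fin K // x ∉ S} := by
    have h1 : Fintype.card {x : Fin K // x ∉ S}
        = Fintype.card (Fin K) - Fintype.card {x : Fin K // x ∈ S} :=
      Fintype.card_subtype_compl _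
    have h2 : Fintype.card {x : Fin K // x ∈ S} = S.card := Fintype.card_coe S
    simp only [Fintype.card_sum, Fintype.card_fin] at *
    rw [h1, h2, hScard]
    omega
  have hgbij : Function.Bijective g :=
    (Fintype.bijective_iff_injective_and_card g).mpr ⟨hginj, hcard⟩
  set e := Equiv.ofBijective g hgbij with he
  have hdet : ((-(diffMatrix K κ z)).submatrix
        (fun x : {x : Fin K // x ∉ S} => (x : Fin K))
        (fun x : {x : Fin K // x ∉ S} => (x : Fin K))).det
      = ((-(diffMatrix K κ z)).submatrix f f).det := by
    rw [← Matrix.det_submatrix_equiv_self e]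
    congr 1
  have hblocks : (-(diffMatrix K κ z)).submatrix f f
      = Matrix.fromBlocks
          (pm (fun t => ea K κ z (u + 1 + t)) (fun t => eb K κ z (u + 1 + t))
             (fun t => ew K κ (u + 1 + t)) n1)
          0 0
          (pm (fun t => ea K κ z (u + d + 1 + t)) (fun t => eb K κ z (u + d + 1 + t))
             (fun t => ew K κ (u + d + 1 + t)) n2) := by
    ext x y
    cases x with
    | inl s =>
      cases y with
      | inl t =>
        have hs := s.2; have ht := t.2
        simp only [Matrix.submatrix_apply, hf, Sum.elim_inl, Matrix.fromBlocks_apply₁₁]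
        rcases Nat.lt_trichotomy (s : ℕ) (t : ℕ) with hlt | heq | hgt
        · by_cases hadj : (s : ℕ) + 1 = t
          · have e1 : u + 1 + (t : ℕ) = (u + 1 + (s : ℕ)) + 1 := by omega
            rw [e1, negA_super K κ z h0 hK (u + 1 + (s : ℕ))]
            simp only [pm, Matrix.of_apply]
            rw [if_neg (by omega), if_pos hadj]
            congr 2
            omega
          · have e1 : u + 1 + (t : ℕ) = (u + 1 + (s : ℕ)) + ((t : ℕ) - (s : ℕ)) := by omega
            rw [e1, (negA_far K κ z h0 hK (u + 1 + (s : ℕ)) ((t : ℕ) - (s : ℕ))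
              (by omega) (by omega)).1]
            simp only [pm, Matrix.of_apply]
            rw [if_neg (by omega), if_neg (by omega), if_neg (by omega)]
        · have e1 : u + 1 + (t : ℕ) = u + 1 + (s : ℕ) := by omega
          rw [e1, negA_diag K κ z h0 hK hκ (u + 1 + (s : ℕ))]
          simp only [pm, Matrix.of_apply]
          rw [if_pos heq]
          rfl
        · by_cases hadj : (t : ℕ) + 1 = s
          · have e1 : u + 1 + (s : ℕ) = (u + 1 + (t : ℕ)) + 1 := by omega
            rw [e1, negA_sub K κ z h0 hK (u + 1 + (t : ℕ))]
            simp only [pm, Matrix.of_apply]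
            rw [if_neg (by omega), if_neg (by omega), if_pos hadj]
            congr 2
            omega
          · have e1 : u + 1 + (s : ℕ) = (u + 1 + (t : ℕ)) + ((s : ℕ) - (t : ℕ)) := by omega
            rw [e1, (negA_far K κ z h0 hK (u + 1 + (t : ℕ)) ((s : ℕ) - (t : ℕ))
              (by omega) (by omega)).2]
            simp only [pm, Matrix.of_apply]
            rw [if_neg (by omega), if_neg (by omega), if_neg (by omega)]
      | inr t =>
        have hs := s.2; have ht := t.2
        simp only [Matrix.submatrix_apply, hf, Sum.elim_inl, Sum.elim_inr,
          Matrix.fromBlocks_apply₁₂, Matrix.zero_apply]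
        have e1 : u + d + 1 + (t : ℕ) = (u + 1 + (s : ℕ)) + (d + (t : ℕ) - (s : ℕ)) := by omega
        rw [e1, (negA_far K κ z h0 hK (u + 1 + (s : ℕ)) (d + (t : ℕ) - (s : ℕ))
          (by omega) (by omega)).1]
    | inr s =>
      cases y with
      | inl t =>
        have hs := s.2; have ht := t.2
        simp only [Matrix.submatrix_apply, hf, Sum.elim_inl, Sum.elim_inr,
          Matrix.fromBlocks_apply₂₁, Matrix.zero_apply]
        have e1 : u + d + 1 + (s : ℕ) = (u + 1 + (t : ℕ)) + (d + (s : ℕ) - (t : ℕ)) := by omega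
        rw [e1, (negA_far K κ z h0 hK (u + 1 + (t : ℕ)) (d + (s : ℕ) - (t : ℕ))
          (by omega) (by omega)).2]
      | inr t =>
        have hs := s.2; have ht := t.2
        simp only [Matrix.submatrix_apply, hf, Sum.elim_inr, Matrix.fromBlocks_apply₂₂]
        rcases Nat.lt_trichotomy (s : ℕ) (t : ℕ) with hlt | heq | hgt
        · by_cases hadj : (s : ℕ) + 1 = t
          · have e1 : u + d + 1 + (t : ℕ) = (u + d + 1 + (s : ℕ)) + 1 := by omega
            rw [e1, negA_super K κ z h0 hK (u + d + 1 + (s : ℕ))]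
            simp only [pm, Matrix.of_apply]
            rw [if_neg (by omega), if_pos hadj]
            congr 2
            omega
          · have e1 : u + d + 1 + (t : ℕ) = (u + d + 1 + (s : ℕ)) + ((t : ℕ) - (s : ℕ)) := by
              omega
            rw [e1, (negA_far K κ z h0 hK (u + d + 1 + (s : ℕ)) ((t : ℕ) - (s : ℕ))
              (by omega) (by omega)).1]
            simp only [pm, Matrix.of_apply]
            rw [if_neg (by omega), if_neg (by omega), if_neg (by omega)]
        · have e1 : u + d + 1 + (t : ℕ) = u + d + 1 + (s : ℕ) := by omega
          rw [e1, negA_diag K κ z h0 hK hκ (u + d + 1 + (s : ℕ))]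
          simp only [pm, Matrix.of_apply]
          rw [if_pos heq]
          rfl
        · by_cases hadj : (t : ℕ) + 1 = s
          · have e1 : u + d + 1 + (s : ℕ) = (u + d + 1 + (t : ℕ)) + 1 := by omega
            rw [e1, negA_sub K κ z h0 hK (u + d + 1 + (t : ℕ))]
            simp only [pm, Matrix.of_apply]
            rw [if_neg (by omega), if_neg (by omega), if_pos hadj]
            congr 2
            omega
          · have e1 : u + d + 1 + (s : ℕ) = (u + d + 1 + (t : ℕ)) + ((s : ℕ) - (t : ℕ)) := by
              omega
            rw [e1, (negA_far K κ z h0 hK (u + d + 1 + (t : ℕ)) ((s : ℕ) - (t : ℕ))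
              (by omega) (by omega)).2]
            simp only [pm, Matrix.of_apply]
            rw [if_neg (by omega), if_neg (by omega), if_neg (by omega)]
  rw [hdet, hblocks, Matrix.det_fromBlocks_zero₁₂,
    pm_det _ _ _ (fun t => hab_lemma K κ z hκ hz (u + 1 + t)) n1,
    pm_det _ _ _ (fun t => hab_lemma K κ z hκ hz (u + d + 1 + t)) n2]
  unfold Efun
  rw [show n1 + 1 = d from by omega, show n2 + 1 = K - d from by omega,
    Finset.sum_mul_sum]
def rep (K m : ℕ) : ℕ := if m % K = 0 then K else m % K

lemma rep_mod (K : ℕ) (h0 : 0 < K) (m : ℕ) : rep K m % K = m % K := by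
  unfold rep
  split
  · rw [Nat.mod_self]; omega
  · exact Nat.mod_eq_of_lt (Nat.mod_lt m h0)

lemma rep_mem_Icc (K : ℕ) (h0 : 0 < K) (m : ℕ) : rep K m ∈ Finset.Icc 1 K := by
  have := Nat.mod_lt m h0
  unfold rep
  split <;> simp only [Finset.mem_Icc] <;> omega

lemma rep_kappa (K : ℕ) (κ : ℕ → ℝ) (hκ : κ 0 = κ K) (m : ℕ) :
    (κ (rep K m) : ℂ) = ew K κ m := by
  unfold rep ew
  split
  · rename_i h
    rw [h, hκ]
  · rfl

lemma mod_eq_window (K : ℕ) (h0 : 0 < K) (m a b : ℕ) (ha : a ≤ K) (hb : b ≤ K)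
    (h : (m + a) % K = (m + b) % K) : a = b ∨ (a = 0 ∧ b = K) ∨ (a = K ∧ b = 0) := by
  rcases Nat.lt_or_ge a K with ha' | ha'
  · rcases Nat.lt_or_ge b K with hb' | hb'
    · exact Or.inl (mod_inj_window K h0 m a b ha' hb' h)
    · have hb2 : b = K := by omega
      have h' : (m + a) % K = (m + 0) % K := by
        rw [hb2] at h
        rw [Nat.add_mod_right] at h
        rwa [Nat.add_zero]
      have := mod_inj_window K h0 m a 0 ha' h0 h'
      omega
  · have ha2 : a = K := by omega
    have h' : (m + 0) % K = (m + b) % K := by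
      rw [ha2] at h
      rw [Nat.add_mod_right] at h
      rwa [Nat.add_zero]
    rcases Nat.lt_or_ge b K with hb' | hb'
    · have := mod_inj_window K h0 m 0 b h0 hb' h'
      omega
    · omega

lemma prod_combine (K : ℕ) (h0 : 0 < K) (hK : 3 ≤ K) (κ : ℕ → ℝ) (hκ : κ 0 = κ K)
    (u d t1 t2 : ℕ) (hd1 : 1 ≤ d) (hd2 : d ≤ K - 1) (ht1 : t1 < d) (ht2 : t2 < K - d) :
    (∏ s ∈ (Finset.range d).erase t1, ew K κ (u + 1 + s)) *
    (∏ s ∈ (Finset.range (K - d)).erase t2, ew K κ (u + d + 1 + s))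
    = ∏ i ∈ (Finset.Icc 1 K).filter
        (fun i => i % K ≠ (u + 1 + t1) % K ∧ i % K ≠ (u + d + 1 + t2) % K), (κ i : ℂ) := by
  classical
  set T1 := ((Finset.range d).erase t1).image (fun s => rep K (u + 1 + s)) with hT1
  set T2 := ((Finset.range (K - d)).erase t2).image (fun s => rep K (u + d + 1 + s)) with hT2
  -- a general congruence tool
  have hmodeq : ∀ a b : ℕ, a ≤ K → b ≤ K → (u + a) % K = (u + b) % K →
      a = b ∨ (a = 0 ∧ b = K) ∨ (a = K ∧ b = 0) := fun a b ha hb h =>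
    mod_eq_window K h0 u a b ha hb h
  have hkey : ∀ a b : ℕ, rep K (u + a) % K = rep K (u + b) % K →
      a ≤ K → b ≤ K → (a = b ∨ (a = 0 ∧ b = K) ∨ (a = K ∧ b = 0)) := by
    intro a b h ha hb
    rw [rep_mod K h0, rep_mod K h0] at h
    exact hmodeq a b ha hb h
  have hinj1 : Set.InjOn (fun s => rep K (u + 1 + s)) ((Finset.range d).erase t1) := by
    intro s hs s' hs' h
    simp only [Finset.mem_coe, Finset.mem_erase, Finset.mem_range] at hs hs'
    have h2 : rep K (u + 1 + s) = rep K (u + 1 + s') := h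
    have h' : rep K (u + (1 + s)) % K = rep K (u + (1 + s')) % K := by
      rw [show u + (1 + s) = u + 1 + s by omega, show u + (1 + s') = u + 1 + s' by omega, h2]
    have := hkey (1 + s) (1 + s') h' (by omega) (by omega)
    omega
  have hinj2 : Set.InjOn (fun s => rep K (u + d + 1 + s)) ((Finset.range (K - d)).erase t2) := by
    intro s hs s' hs' h
    simp only [Finset.mem_coe, Finset.mem_erase, Finset.mem_range] at hs hs'
    have h2 : rep K (u + d + 1 + s) = rep K (u + d + 1 + s') := h
    have h' : rep K (u + (d + 1 + s)) % K = rep K (u + (d + 1 + s')) % K := by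
      rw [show u + (d + 1 + s) = u + d + 1 + s by omega,
        show u + (d + 1 + s') = u + d + 1 + s' by omega, h2]
    have := hkey (d + 1 + s) (d + 1 + s') h' (by omega) (by omega)
    omega
  have hdisj : Disjoint T1 T2 := by
    rw [Finset.disjoint_left]
    intro i hi1 hi2
    rw [hT1, Finset.mem_image] at hi1
    rw [hT2, Finset.mem_image] at hi2
    obtain ⟨s, hs, hse⟩ := hi1
    obtain ⟨s', hs', hse'⟩ := hi2
    simp only [Finset.mem_erase, Finset.mem_range] at hs hs'
    have h' : rep K (u + (1 + s)) % K = rep K (u + (d + 1 + s')) % K := by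
      rw [show u + (1 + s) = u + 1 + s by omega,
        show u + (d + 1 + s') = u + d + 1 + s' by omega, hse, hse']
    have := hkey (1 + s) (d + 1 + s') h' (by omega) (by omega)
    omega
  have hsubset : T1 ∪ T2 ⊆ (Finset.Icc 1 K).filter
      (fun i => i % K ≠ (u + 1 + t1) % K ∧ i % K ≠ (u + d + 1 + t2) % K) := by
    intro i hi
    rw [Finset.mem_union] at hi
    rw [Finset.mem_filter]
    rcases hi with hi | hi
    · rw [hT1, Finset.mem_image] at hi
      obtain ⟨s, hs, hse⟩ := hi
      simp only [Finset.mem_erase, Finset.mem_range] at hs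
      subst hse
      refine ⟨rep_mem_Icc K h0 _, ?_, ?_⟩
      · rw [rep_mod K h0]
        intro h
        have h' : (u + (1 + s)) % K = (u + (1 + t1)) % K := by
          rw [show u + (1 + s) = u + 1 + s by omega, show u + (1 + t1) = u + 1 + t1 by omega, h]
        have := hmodeq (1 + s) (1 + t1) (by omega) (by omega) h'
        omega
      · rw [rep_mod K h0]
        intro h
        have h' : (u + (1 + s)) % K = (u + (d + 1 + t2)) % K := by
          rw [show u + (1 + s) = u + 1 + s by omega,
            show u + (d + 1 + t2) = u + d + 1 + t2 by omega, h]
        have := hmodeq (1 + s) (d + 1 + t2) (by omega) (by omega) h'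
        omega
    · rw [hT2, Finset.mem_image] at hi
      obtain ⟨s, hs, hse⟩ := hi
      simp only [Finset.mem_erase, Finset.mem_range] at hs
      subst hse
      refine ⟨rep_mem_Icc K h0 _, ?_, ?_⟩
      · rw [rep_mod K h0]
        intro h
        have h' : (u + (d + 1 + s)) % K = (u + (1 + t1)) % K := by
          rw [show u + (d + 1 + s) = u + d + 1 + s by omega,
            show u + (1 + t1) = u + 1 + t1 by omega, h]
        have := hmodeq (d + 1 + s) (1 + t1) (by omega) (by omega) h'
        omega
      · rw [rep_mod K h0]
        intro h
        have h' : (u + (d + 1 + s)) % K = (u + (d + 1 + t2)) % K := by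
          rw [show u + (d + 1 + s) = u + d + 1 + s by omega,
            show u + (d + 1 + t2) = u + d + 1 + t2 by omega, h]
        have := hmodeq (d + 1 + s) (d + 1 + t2) (by omega) (by omega) h'
        omega
  have hcard1 : T1.card = d - 1 := by
    rw [hT1, Finset.card_image_of_injOn hinj1,
      Finset.card_erase_of_mem (Finset.mem_range.mpr ht1), Finset.card_range]
  have hcard2 : T2.card = K - d - 1 := by
    rw [hT2, Finset.card_image_of_injOn hinj2,
      Finset.card_erase_of_mem (Finset.mem_range.mpr ht2), Finset.card_range]
  have hne12 : rep K (u + d + 1 + t2) ≠ rep K (u + 1 + t1) := by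
    intro h
    have h' : rep K (u + (d + 1 + t2)) % K = rep K (u + (1 + t1)) % K := by
      rw [show u + (d + 1 + t2) = u + d + 1 + t2 by omega,
        show u + (1 + t1) = u + 1 + t1 by omega, h]
    have := hkey (d + 1 + t2) (1 + t1) h' (by omega) (by omega)
    omega
  have hcardfil : ((Finset.Icc 1 K).filter
      (fun i => i % K ≠ (u + 1 + t1) % K ∧ i % K ≠ (u + d + 1 + t2) % K)).card ≤ K - 2 := by
    have hsub2 : (Finset.Icc 1 K).filter
        (fun i => i % K ≠ (u + 1 + t1) % K ∧ i % K ≠ (u + d + 1 + t2) % K)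
        ⊆ ((Finset.Icc 1 K).erase (rep K (u + 1 + t1))).erase (rep K (u + d + 1 + t2)) := by
      intro i hi
      rw [Finset.mem_filter] at hi
      obtain ⟨hIcc, hc1, hc2⟩ := hi
      rw [Finset.mem_erase, Finset.mem_erase]
      refine ⟨?_, ?_, hIcc⟩
      · intro h; exact hc2 (by rw [h, rep_mod K h0])
      · intro h; exact hc1 (by rw [h, rep_mod K h0])
    have := Finset.card_le_card hsub2
    rw [Finset.card_erase_of_mem, Finset.card_erase_of_mem (rep_mem_Icc K h0 _),
      Nat.card_Icc] at this
    · omega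
    · rw [Finset.mem_erase]
      exact ⟨hne12, rep_mem_Icc K h0 _⟩
  have hunion : T1 ∪ T2 = (Finset.Icc 1 K).filter
      (fun i => i % K ≠ (u + 1 + t1) % K ∧ i % K ≠ (u + d + 1 + t2) % K) := by
    apply Finset.eq_of_subset_of_card_le hsubset
    rw [Finset.card_union_of_disjoint hdisj, hcard1, hcard2]
    omega
  rw [← hunion, Finset.prod_union hdisj, hT1, hT2,
    Finset.prod_image hinj1, Finset.prod_image hinj2]
  congr 1 <;> exact Finset.prod_congr rfl fun s _ => (rep_kappa K κ hκ _).symm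
lemma rep_uniq (K : ℕ) (h0 : 0 < K) (m v : ℕ) (hm : 1 ≤ m) (hm2 : m ≤ K) (hv : v < K)
    (h : m % K = v) : m = rep K v := by
  unfold rep
  have h'' : v % K = v := Nat.mod_eq_of_lt hv
  split_ifs with h'
  · have hv0 : v = 0 := by omega
    rcases Nat.lt_or_ge m K with hmK | hmK
    · rw [Nat.mod_eq_of_lt hmK] at h; omega
    · omega
  · have hvne : v ≠ 0 := by omega
    rw [h'']
    rcases Nat.lt_or_ge m K with hmK | hmK
    · rw [Nat.mod_eq_of_lt hmK] at h; omega
    · have hmm : m = K := by omega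
      rw [hmm, Nat.mod_self] at h
      omega

lemma m2_uniq (K : ℕ) (h0 : 0 < K) (x y m₂ : ℕ) (hx : x < K) (hy : y < K)
    (h1 : 1 ≤ m₂) (h2 : m₂ ≤ K - 1) (h : (x + m₂) % K = y) : m₂ = (K + y - x) % K := by
  have e1 := mod_two_cases K h0 x m₂ (by omega)
  rw [Nat.mod_eq_of_lt hx] at e1
  have hcm : (K + y - x) % K < K := Nat.mod_lt _ h0
  have e2 : (K + y - x) % K = (K + y - x) ∨
      ((K + y - x) % K = (K + y - x) - K ∧ K ≤ K + y - x) := by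
    rcases Nat.lt_or_ge (K + y - x) K with hc | hc
    · left; exact Nat.mod_eq_of_lt hc
    · right
      rw [Nat.mod_eq_sub_mod hc, Nat.mod_eq_of_lt (by omega)]
      omega
  rw [h] at e1
  rcases e2 with e2 | e2
  · rw [e2] at hcm ⊢
    rcases e1 with e1 | e1 <;> omega
  · have he := e2.2
    rw [e2.1] at hcm ⊢
    rcases e1 with e1 | e1 <;> omega

lemma m2_props (K : ℕ) (h0 : 0 < K) (x y : ℕ) (hx : x < K) (hy : y < K) (hne : x ≠ y) :
    1 ≤ (K + y - x) % K ∧ (K + y - x) % K ≤ K - 1 ∧ (x + ((K + y - x) % K)) % K = y := by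
  have hcm : (K + y - x) % K < K := Nat.mod_lt _ h0
  have e2 : (K + y - x) % K = (K + y - x) ∨
      ((K + y - x) % K = (K + y - x) - K ∧ K ≤ K + y - x) := by
    rcases Nat.lt_or_ge (K + y - x) K with hc | hc
    · left; exact Nat.mod_eq_of_lt hc
    · right
      rw [Nat.mod_eq_sub_mod hc, Nat.mod_eq_of_lt (by omega)]
      omega
  have third : (x + ((K + y - x) % K)) % K = y := by
    rw [Nat.add_comm x ((K + y - x) % K), Nat.mod_add_mod, Nat.add_comm (K + y - x) x,
      show x + (K + y - x) = K + y by omega, Nat.add_mod_left, Nat.mod_eq_of_lt hy]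
  rcases e2 with e2 | e2
  · exact ⟨by rw [e2]; omega, by rw [e2] at hcm ⊢; omega, third⟩
  · exact ⟨by rw [e2.1]; omega, by rw [e2.1] at hcm ⊢; omega, third⟩
lemma fv_of_rep (K : ℕ) (h0 : 0 < K) (x : Fin K) : fv K h0 (rep K (x : ℕ)) = x := by
  apply Fin.ext
  show rep K (x : ℕ) % K = (x : ℕ)
  rw [rep_mod K h0, Nat.mod_eq_of_lt x.isLt]

lemma fv_pair (K : ℕ) (h0 : 0 < K) (x y : Fin K) (hxy : x ≠ y) :
    fv K h0 (rep K (x : ℕ) + (K + (y : ℕ) - (x : ℕ)) % K) = y := by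
  have hm := m2_props K h0 (x : ℕ) (y : ℕ) x.isLt y.isLt
    (fun h => hxy (Fin.ext h))
  apply Fin.ext
  show (rep K (x : ℕ) + (K + (y : ℕ) - (x : ℕ)) % K) % K = (y : ℕ)
  rw [← Nat.mod_add_mod, rep_mod K h0, Nat.mod_eq_of_lt x.isLt]
  exact hm.2.2

lemma pair_mem_P (K : ℕ) (h0 : 0 < K) (x y : Fin K) (hxy : x ≠ y) :
    (rep K (x : ℕ), (K + (y : ℕ) - (x : ℕ)) % K)
      ∈ (Finset.Icc 1 K) ×ˢ (Finset.Icc 1 (K - 1)) := by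
  have hm := m2_props K h0 (x : ℕ) (y : ℕ) x.isLt y.isLt (fun h => hxy (Fin.ext h))
  rw [Finset.mem_product]
  exact ⟨rep_mem_Icc K h0 _, Finset.mem_Icc.mpr ⟨hm.1, hm.2.1⟩⟩

lemma sum_pairs (K : ℕ) (h0 : 0 < K) (hK : 3 ≤ K) (h : Finset (Fin K) → ℂ) :
    ∑ p ∈ (Finset.Icc 1 K) ×ˢ (Finset.Icc 1 (K - 1)),
        h {fv K h0 p.1, fv K h0 (p.1 + p.2)}
      = ∑ S ∈ Finset.powersetCard 2 (Finset.univ : Finset (Fin K)), 2 • h S := by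
  classical
  set P := (Finset.Icc 1 K) ×ˢ (Finset.Icc 1 (K - 1)) with hP
  set φ : ℕ × ℕ → Finset (Fin K) := fun p => {fv K h0 p.1, fv K h0 (p.1 + p.2)} with hφ
  have hφcard : ∀ p ∈ P, (φ p).card = 2 := by
    intro p hp
    rw [hP, Finset.mem_product, Finset.mem_Icc, Finset.mem_Icc] at hp
    rw [hφ]
    rw [Finset.card_insert_of_notMem, Finset.card_singleton]
    rw [Finset.mem_singleton]
    intro hcon
    exact fv_ne K h0 p.1 0 p.2 (by omega) (by omega) hcon.symm
  have himage : P.image φ = Finset.powersetCard 2 (Finset.univ : Finset (Fin K)) := by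
    apply Finset.Subset.antisymm
    · intro T hT
      rw [Finset.mem_image] at hT
      obtain ⟨p, hp, rfl⟩ := hT
      rw [Finset.mem_powersetCard]
      exact ⟨Finset.subset_univ _, hφcard p hp⟩
    · intro T hT
      rw [Finset.mem_powersetCard] at hT
      obtain ⟨x, y, hxy, rfl⟩ := Finset.card_eq_two.mp hT.2
      rw [Finset.mem_image]
      refine ⟨(rep K (x : ℕ), (K + (y : ℕ) - (x : ℕ)) % K), pair_mem_P K h0 x y hxy, ?_⟩
      rw [hφ]
      show ({fv K h0 (rep K (x : ℕ)), fv K h0 (rep K (x : ℕ) + (K + (y : ℕ) - (x : ℕ)) % K)}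
        : Finset (Fin K)) = {x, y}
      rw [fv_of_rep K h0 x, fv_pair K h0 x y hxy]
  have hfiber : ∀ T ∈ Finset.powersetCard 2 (Finset.univ : Finset (Fin K)),
      (P.filter (fun p => φ p = T)).card = 2 := by
    intro T hT
    rw [Finset.mem_powersetCard] at hT
    obtain ⟨x, y, hxy, rfl⟩ := Finset.card_eq_two.mp hT.2
    have hkey : P.filter (fun p => φ p = {x, y})
        = {(rep K (x : ℕ), (K + (y : ℕ) - (x : ℕ)) % K),
           (rep K (y : ℕ), (K + (x : ℕ) - (y : ℕ)) % K)} := by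
      apply Finset.ext
      intro p
      rw [Finset.mem_filter, Finset.mem_insert, Finset.mem_singleton]
      constructor
      · rintro ⟨hpP, hpφ⟩
        have hp' := hpP
        rw [hP, Finset.mem_product, Finset.mem_Icc, Finset.mem_Icc] at hp'
        have h1 : fv K h0 p.1 ∈ ({x, y} : Finset (Fin K)) := by
          rw [← hpφ, hφ]; exact Finset.mem_insert_self _ _
        have h2 : fv K h0 (p.1 + p.2) ∈ ({x, y} : Finset (Fin K)) := by
          rw [← hpφ, hφ]
          exact Finset.mem_insert_of_mem (Finset.mem_singleton_self _)
        have hne : fv K h0 p.1 ≠ fv K h0 (p.1 + p.2) :=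
          fun hcon => fv_ne K h0 p.1 0 p.2 (by omega) (by omega) hcon.symm
        rw [Finset.mem_insert, Finset.mem_singleton] at h1 h2
        rcases h1 with h1 | h1
        · left
          have h2' : fv K h0 (p.1 + p.2) = y := by
            rcases h2 with h2 | h2
            · exact absurd (h1.trans h2.symm) hne
            · exact h2
          have hv1 : p.1 % K = (x : ℕ) := congrArg Fin.val h1
          have hv2 : (p.1 + p.2) % K = (y : ℕ) := congrArg Fin.val h2'
          have hv2' : ((x : ℕ) + p.2) % K = (y : ℕ) := by
            rw [← hv1, Nat.mod_add_mod]; exact hv2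
          have e1 : p.1 = rep K (x : ℕ) :=
            rep_uniq K h0 p.1 (x : ℕ) (by omega) (by omega) x.isLt hv1
          have e2 : p.2 = (K + (y : ℕ) - (x : ℕ)) % K :=
            m2_uniq K h0 (x : ℕ) (y : ℕ) p.2 x.isLt y.isLt (by omega) (by omega) hv2'
          exact Prod.ext e1 e2
        · right
          have h2' : fv K h0 (p.1 + p.2) = x := by
            rcases h2 with h2 | h2
            · exact h2
            · exact absurd (h1.trans h2.symm) hne
          have hv1 : p.1 % K = (y : ℕ) := congrArg Fin.val h1
          have hv2 : (p.1 + p.2) % K = (x : ℕ) := congrArg Fin.val h2'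
          have hv2' : ((y : ℕ) + p.2) % K = (x : ℕ) := by
            rw [← hv1, Nat.mod_add_mod]; exact hv2
          have e1 : p.1 = rep K (y : ℕ) :=
            rep_uniq K h0 p.1 (y : ℕ) (by omega) (by omega) y.isLt hv1
          have e2 : p.2 = (K + (x : ℕ) - (y : ℕ)) % K :=
            m2_uniq K h0 (y : ℕ) (x : ℕ) p.2 y.isLt x.isLt (by omega) (by omega) hv2'
          exact Prod.ext e1 e2
      · intro hp
        rcases hp with hp | hp
        · subst hp
          refine ⟨pair_mem_P K h0 x y hxy, ?_⟩
          rw [hφ]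
          show ({fv K h0 (rep K (x : ℕ)),
            fv K h0 (rep K (x : ℕ) + (K + (y : ℕ) - (x : ℕ)) % K)} : Finset (Fin K)) = {x, y}
          rw [fv_of_rep K h0 x, fv_pair K h0 x y hxy]
        · subst hp
          refine ⟨pair_mem_P K h0 y x hxy.symm, ?_⟩
          rw [hφ]
          show ({fv K h0 (rep K (y : ℕ)),
            fv K h0 (rep K (y : ℕ) + (K + (x : ℕ) - (y : ℕ)) % K)} : Finset (Fin K)) = {x, y}
          rw [fv_of_rep K h0 y, fv_pair K h0 y x hxy.symm]
          exact Finset.pair_comm y x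
    rw [hkey, Finset.card_insert_of_notMem, Finset.card_singleton]
    rw [Finset.mem_singleton]
    intro hcon
    have : rep K (x : ℕ) = rep K (y : ℕ) := congrArg Prod.fst hcon
    have hmx : (x : ℕ) % K = (y : ℕ) % K := by
      rw [← rep_mod K h0, this, rep_mod K h0]
    rw [Nat.mod_eq_of_lt x.isLt, Nat.mod_eq_of_lt y.isLt] at hmx
    exact hxy (Fin.ext hmx)
  rw [Finset.sum_comp h φ, himage]
  exact Finset.sum_congr rfl fun T hT => by rw [hfiber T hT]
lemma mod_recover (K : ℕ) (h0 : 0 < K) (a t : ℕ) (ha1 : 1 ≤ a) (ha2 : a ≤ K) (ht : t ≤ K) :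
    ((a + t) % K + 1 + 2*K - (2 + t)) % K + 1 = a := by
  have hb : (a + t) % K < K := Nat.mod_lt _ h0
  have e1 : (a + t) % K + 1 + 2*K - (2 + t) = (a + t) % K + (2*K - 1 - t) := by omega
  rw [e1, Nat.mod_add_mod]
  have e2 : a + t + (2*K - 1 - t) = (a - 1) + K + K := by omega
  rw [e2, Nat.add_mod_right, Nat.add_mod_right, Nat.mod_eq_of_lt (by omega)]
  omega

lemma mod_recover2 (K : ℕ) (h0 : 0 < K) (μ t : ℕ) (hμ1 : 1 ≤ μ) (hμ2 : μ ≤ K) (ht : t ≤ K) :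
    ((μ + 2*K - (2 + t)) % K + 1 + t) % K + 1 = μ := by
  have hb : (μ + 2*K - (2+t)) % K < K := Nat.mod_lt _ h0
  have e1 : (μ + 2*K - (2+t)) % K + 1 + t = (μ + 2*K - (2+t)) % K + (1 + t) := by omega
  rw [e1, Nat.mod_add_mod]
  have e2 : μ + 2*K - (2+t) + (1+t) = (μ - 1) + K + K := by omega
  rw [e2, Nat.add_mod_right, Nat.add_mod_right, Nat.mod_eq_of_lt (by omega)]
  omega

lemma sigma_pair_eq {a c b d : ℕ × ℕ} (h1 : a = c) (h2 : b = d) :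
    (⟨a, b⟩ : (_ : ℕ × ℕ) × (ℕ × ℕ)) = ⟨c, d⟩ := by subst h1; subst h2; rfl

lemma grand (K : ℕ) (h0 : 0 < K) (κ : ℕ → ℝ) :
    ∑ m₁ ∈ Finset.Icc 1 K, ∑ m₂ ∈ Finset.Icc 1 (K-1), ∑ t1 ∈ Finset.range m₂,
        ∑ t2 ∈ Finset.range (K - m₂),
        ∏ i ∈ (Finset.Icc 1 K).filter
            (fun i => i % K ≠ (m₁ + 1 + t1) % K ∧ i % K ≠ (m₁ + m₂ + 1 + t2) % K), (κ i : ℂ)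
      = ∑ m₁ ∈ Finset.Icc 1 K, ∑ m₂ ∈ Finset.Icc 1 (K-1),
          ((m₂ * (K - m₂) : ℕ) : ℂ) *
          ∏ i ∈ (Finset.Icc 1 K).filter
              (fun i => i % K ≠ m₁ % K ∧ i % K ≠ (m₁ + m₂) % K), (κ i : ℂ) := by
  classical
  have flat : ∀ (B C : ℕ → ℕ → Finset ℕ) (G : ℕ → ℕ → ℕ → ℕ → ℂ),
      (∑ m₁ ∈ Finset.Icc 1 K, ∑ m₂ ∈ Finset.Icc 1 (K-1), ∑ t1 ∈ B m₁ m₂,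
        ∑ t2 ∈ C m₁ m₂, G m₁ m₂ t1 t2)
      = ∑ x ∈ ((Finset.Icc 1 K) ×ˢ (Finset.Icc 1 (K-1))).sigma
            (fun p => (B p.1 p.2) ×ˢ (C p.1 p.2)),
          G x.1.1 x.1.2 x.2.1 x.2.2 := by
    intro B C G
    refine Eq.trans ?_ (Finset.sum_sigma _ _ _).symm
    rw [Finset.sum_product]
    exact Finset.sum_congr rfl fun m₁ _ => Finset.sum_congr rfl fun m₂ _ =>
      (Finset.sum_product (B m₁ m₂) (C m₁ m₂) (fun s => G m₁ m₂ s.1 s.2)).symm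
  have hconst : ∀ m₂ : ℕ, ∀ c : ℂ, ((m₂ * (K - m₂) : ℕ) : ℂ) * c
      = ∑ s1 ∈ Finset.Icc 1 m₂, ∑ s2 ∈ Finset.Icc 1 (K - m₂), c := by
    intro m₂ c
    rw [Finset.sum_const, Finset.sum_const, Nat.card_Icc, Nat.card_Icc,
      Nat.add_sub_cancel, Nat.add_sub_cancel, smul_smul, nsmul_eq_mul, Nat.cast_mul]
  have hRHS : (∑ m₁ ∈ Finset.Icc 1 K, ∑ m₂ ∈ Finset.Icc 1 (K-1),
      ((m₂ * (K - m₂) : ℕ) : ℂ) *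
      ∏ i ∈ (Finset.Icc 1 K).filter
          (fun i => i % K ≠ m₁ % K ∧ i % K ≠ (m₁ + m₂) % K), (κ i : ℂ))
      = ∑ m₁ ∈ Finset.Icc 1 K, ∑ m₂ ∈ Finset.Icc 1 (K-1), ∑ s1 ∈ Finset.Icc 1 m₂,
          ∑ s2 ∈ Finset.Icc 1 (K - m₂),
          ∏ i ∈ (Finset.Icc 1 K).filter
              (fun i => i % K ≠ m₁ % K ∧ i % K ≠ (m₁ + m₂) % K), (κ i : ℂ) :=
    Finset.sum_congr rfl fun m₁ _ => Finset.sum_congr rfl fun m₂ _ => hconst m₂ _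
  rw [hRHS]
  refine ((flat _ _ _).trans ?_).trans (flat _ _ _).symm
  refine Finset.sum_nbij'
    (i := fun q => ⟨(((q.1.1 + q.2.1) % K) + 1, q.1.2 + q.2.2 - q.2.1),
            (q.1.2 - q.2.1, K - q.1.2 - q.2.2)⟩)
    (j := fun q => ⟨(((q.1.1 + 2*K - (2 + (K - q.1.2 - q.2.2))) % K) + 1,
               q.2.1 + (K - q.1.2 - q.2.2)),
              (K - q.1.2 - q.2.2, q.1.2 - q.2.1)⟩) ?_ ?_ ?_ ?_ ?_
  · rintro ⟨⟨m₁, m₂⟩, t1, t2⟩ hq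
    simp only [Finset.mem_sigma, Finset.mem_product, Finset.mem_Icc, Finset.mem_range] at hq ⊢
    have hb : (m₁ + t1) % K < K := Nat.mod_lt _ h0
    omega
  · rintro ⟨⟨μ₁, μ₂⟩, s1, s2⟩ hq
    simp only [Finset.mem_sigma, Finset.mem_product, Finset.mem_Icc, Finset.mem_range] at hq ⊢
    have hb : (μ₁ + 2*K - (2 + (K - μ₂ - s2))) % K < K := Nat.mod_lt _ h0
    omega
  · rintro ⟨⟨m₁, m₂⟩, t1, t2⟩ hq
    simp only [Finset.mem_sigma, Finset.mem_product, Finset.mem_Icc, Finset.mem_range] at hq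
    dsimp only
    refine sigma_pair_eq (congrArg₂ Prod.mk ?_ ?_) (congrArg₂ Prod.mk ?_ ?_)
    · have ht1 : K - (m₂ + t2 - t1) - (K - m₂ - t2) = t1 := by omega
      rw [ht1]
      exact mod_recover K h0 m₁ t1 (by omega) (by omega) (by omega)
    · omega
    · omega
    · omega
  · rintro ⟨⟨μ₁, μ₂⟩, s1, s2⟩ hq
    simp only [Finset.mem_sigma, Finset.mem_product, Finset.mem_Icc, Finset.mem_range] at hq
    have hb : (μ₁ + 2*K - (2 + (K - μ₂ - s2))) % K < K := Nat.mod_lt _ h0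
    dsimp only
    refine sigma_pair_eq (congrArg₂ Prod.mk ?_ ?_) (congrArg₂ Prod.mk ?_ ?_)
    · exact mod_recover2 K h0 μ₁ (K - μ₂ - s2) (by omega) (by omega) (by omega)
    · omega
    · omega
    · omega
  · rintro ⟨⟨m₁, m₂⟩, t1, t2⟩ hq
    simp only [Finset.mem_sigma, Finset.mem_product, Finset.mem_Icc, Finset.mem_range] at hq
    have hρ1 : (m₁ + 1 + t1) % K = ((m₁ + t1) % K + 1) % K := by
      rw [Nat.mod_add_mod]
      congr 1
      omega
    have hρ2 : (m₁ + m₂ + 1 + t2) % K = ((m₁ + t1) % K + 1 + (m₂ + t2 - t1)) % K := by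
      rw [show (m₁ + t1) % K + 1 + (m₂ + t2 - t1)
          = (m₁ + t1) % K + (1 + (m₂ + t2 - t1)) from by omega, Nat.mod_add_mod]
      congr 1
      omega
    dsimp only
    rw [hρ1, hρ2]

/-- For every integer `K ≥ 3`, all real `κ_1,…,κ_K` (with `κ_0 = κ_K`) and every nonzero
complex `z`, the coefficient of `λ^2` in `det(λI − M(z))` is
`c_2 = (1/2) ∑_{m₁=1}^{K} ∑_{m₂=1}^{K−1} m₂ (K − m₂) ∏_{i ∉ {m₁, m₁+m₂ mod K}} κ_i`,
where the product runs over all indices `i ∈ {1,…,K}` (taken mod `K`) other than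
`m₁` and `m₁ + m₂`. -/
theorem stmt3 (K : ℕ) (hK : 3 ≤ K) (κ : ℕ → ℝ) (hκ : κ 0 = κ K)
    (z : ℂ) (hz : z ≠ 0) :
    (diffMatrix K κ z).charpoly.coeff 2
      = (1 / 2 : ℂ) * ∑ m₁ ∈ Finset.Icc 1 K, ∑ m₂ ∈ Finset.Icc 1 (K - 1),
          ((m₂ * (K - m₂) : ℕ) : ℂ) *
            ∏ i ∈ (Finset.Icc 1 K).filter
                (fun i => i % K ≠ m₁ % K ∧ i % K ≠ (m₁ + m₂) % K),
              (κ i : ℂ) := by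
  have h0 : 0 < K := by omega
  classical
  have hterm : ∀ p ∈ (Finset.Icc 1 K) ×ˢ (Finset.Icc 1 (K-1)),
      ((-(diffMatrix K κ z)).submatrix
        (fun x : {x : Fin K // x ∉ ({fv K h0 p.1, fv K h0 (p.1+p.2)} : Finset (Fin K))} =>
          (x : Fin K))
        (fun x : {x : Fin K // x ∉ ({fv K h0 p.1, fv K h0 (p.1+p.2)} : Finset (Fin K))} =>
          (x : Fin K))).det
      = ∑ t1 ∈ Finset.range p.2, ∑ t2 ∈ Finset.range (K - p.2),
          ∏ i ∈ (Finset.Icc 1 K).filter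
              (fun i => i % K ≠ (p.1+1+t1) % K ∧ i % K ≠ (p.1+p.2+1+t2) % K), (κ i : ℂ) := by
    intro p hp
    rw [Finset.mem_product, Finset.mem_Icc, Finset.mem_Icc] at hp
    rw [minor_det K h0 hK κ hκ z hz p.1 p.2 (by omega) (by omega) _ rfl]
    refine Finset.sum_congr rfl fun t1 ht1 => Finset.sum_congr rfl fun t2 ht2 => ?_
    rw [Finset.mem_range] at ht1 ht2
    exact prod_combine K h0 hK κ hκ p.1 p.2 t1 t2 (by omega) (by omega) ht1 (by omega)
  calc (diffMatrix K κ z).charpoly.coeff 2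
      = ∑ S ∈ Finset.powersetCard 2 (Finset.univ : Finset (Fin K)),
          ((-(diffMatrix K κ z)).submatrix
            (fun x : {x : Fin K // x ∉ S} => (x : Fin K))
            (fun x : {x : Fin K // x ∉ S} => (x : Fin K))).det :=
        charpoly_coeff_minors K 2 (diffMatrix K κ z)
    _ = (1/2 : ℂ) * ∑ S ∈ Finset.powersetCard 2 (Finset.univ : Finset (Fin K)),
          2 • ((-(diffMatrix K κ z)).submatrix
            (fun x : {x : Fin K // x ∉ S} => (x : Fin K))
            (fun x : {x : Fin K // x ∉ S} => (x : Fin K))).det := by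
        rw [Finset.mul_sum]
        refine Finset.sum_congr rfl fun S _ => ?_
        rw [nsmul_eq_mul]
        push_cast
        ring
    _ = (1/2 : ℂ) * ∑ p ∈ (Finset.Icc 1 K) ×ˢ (Finset.Icc 1 (K-1)),
          ((-(diffMatrix K κ z)).submatrix
            (fun x : {x : Fin K // x ∉ ({fv K h0 p.1, fv K h0 (p.1+p.2)} : Finset (Fin K))} =>
              (x : Fin K))
            (fun x : {x : Fin K // x ∉ ({fv K h0 p.1, fv K h0 (p.1+p.2)} : Finset (Fin K))} =>
              (x : Fin K))).det := by
        rw [← sum_pairs K h0 hK (fun S => ((-(diffMatrix K κ z)).submatrix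
          (fun x : {x : Fin K // x ∉ S} => (x : Fin K))
          (fun x : {x : Fin K // x ∉ S} => (x : Fin K))).det)]
    _ = (1/2 : ℂ) * ∑ m₁ ∈ Finset.Icc 1 K, ∑ m₂ ∈ Finset.Icc 1 (K-1),
          ∑ t1 ∈ Finset.range m₂, ∑ t2 ∈ Finset.range (K - m₂),
          ∏ i ∈ (Finset.Icc 1 K).filter
              (fun i => i % K ≠ (m₁+1+t1) % K ∧ i % K ≠ (m₁+m₂+1+t2) % K), (κ i : ℂ) := by
        rw [Finset.sum_product]
        congr 1
        refine Finset.sum_congr rfl fun m₁ hm₁ => Finset.sum_congr rfl fun m₂ hm₂ => ?_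
        exact hterm (m₁, m₂) (Finset.mem_product.mpr ⟨hm₁, hm₂⟩)
    _ = (1/2 : ℂ) * ∑ m₁ ∈ Finset.Icc 1 K, ∑ m₂ ∈ Finset.Icc 1 (K - 1),
          ((m₂ * (K - m₂) : ℕ) : ℂ) *
            ∏ i ∈ (Finset.Icc 1 K).filter
                (fun i => i % K ≠ m₁ % K ∧ i % K ≠ (m₁ + m₂) % K),
              (κ i : ℂ) := by
        rw [grand K h0 κ]
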